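/- Let A ∈ ℝ^{n×n}, B ∈ ℝ^{n×m}, U0 ∈ ℝ^{m×T}, X0, X1, D0 ∈ ℝ^{n×T}, Δ ∈ ℝ^{n×s}, and Ω ∈ ℝ^{n×n} with Ω ≻ 0. Suppose: (i) X1 = A·X0 + B·U0 + D0 and D0·D0ᵀ ⪯ Δ·Δᵀ; (ii) there exist ε > 0 and Y ∈ ℝ^{T×n} such that the block matrix [[X1·Y + (X1·Y)ᵀ + Ω + ε·Δ·Δᵀ, Yᵀ],[Y, −ε·I_T]] is negative definite and X0·Y is symmetric positive definite. Set S := (X0·Y)⁻¹ and K := U0·Y·S. Then S ≻ 0 and S·(A+B·K) + (A+B·K)ᵀ·S + S·Ω·S ≺ 0. -/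

import Mathlib

open Matrix

lemma my_psd_smul {k : ℕ} {M : Matrix (Fin k) (Fin k) ℝ} (h : M.PosSemidef) {c : ℝ}
    (hc : 0 ≤ c) : (c • M).PosSemidef := by
  refine posSemidef_iff_dotProduct_mulVec.mpr ⟨?_, fun x => ?_⟩
  · unfold Matrix.IsHermitian
    rw [conjTranspose_smul, h.1]; simp
  · have := h.dotProduct_mulVec_nonneg x
    simp only [smul_mulVec, dotProduct_smul, smul_eq_mul]
    positivity

lemma my_pd_smul {k : ℕ} {M : Matrix (Fin k) (Fin k) ℝ} (h : M.PosDef) {c : ℝ}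
    (hc : 0 < c) : (c • M).PosDef := by
  refine posDef_iff_dotProduct_mulVec.mpr ⟨?_, fun x hx => ?_⟩
  · unfold Matrix.IsHermitian
    rw [conjTranspose_smul, h.1]; simp
  · have := h.dotProduct_mulVec_pos hx
    simp only [smul_mulVec, dotProduct_smul, smul_eq_mul]
    positivity

lemma my_schur {p q : ℕ} (A : Matrix (Fin p) (Fin p) ℝ) (B : Matrix (Fin p) (Fin q) ℝ)
    {D : Matrix (Fin q) (Fin q) ℝ} (hD : D.PosDef)
    (h : (fromBlocks A B Bᴴ D).PosDef) : (A - B * D⁻¹ * Bᴴ).PosDef := by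
  haveI : Invertible D := D.invertibleOfIsUnitDet (isUnit_iff_ne_zero.2 hD.det_pos.ne')
  refine posDef_iff_dotProduct_mulVec.mpr ⟨(Matrix.IsHermitian.fromBlocks₂₂ A B hD.1).mp h.1, fun x hx => ?_⟩
  have key := h.dotProduct_mulVec_pos (x := Sum.elim x (-((D⁻¹ * Bᴴ) *ᵥ x)))
    (fun hc => hx (funext fun i => congrFun hc (Sum.inl i)))
  rw [dotProduct_mulVec, Matrix.schur_complement_eq₂₂ A B x _ hD.1] at key
  simp only [add_neg_cancel, star_zero, zero_vecMul, zero_dotProduct, zero_add] at key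
  rwa [dotProduct_mulVec]

lemma my_pd_conj {k : ℕ} {M : Matrix (Fin k) (Fin k) ℝ} (hM : M.PosDef)
    {S : Matrix (Fin k) (Fin k) ℝ} (hS : S.PosDef) : (Sᴴ * M * S).PosDef := by
  haveI : Invertible S := S.invertibleOfIsUnitDet (isUnit_iff_ne_zero.2 hS.det_pos.ne')
  refine posDef_iff_dotProduct_mulVec.mpr ⟨isHermitian_conjTranspose_mul_mul S hM.1, fun x hx => ?_⟩
  have hSx : S *ᵥ x ≠ 0 := fun hc => hx (by
    have := congrArg (fun v => S⁻¹ *ᵥ v) hc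
    simpa [mulVec_mulVec, Matrix.nonsing_inv_mul S (isUnit_iff_ne_zero.2 hS.det_pos.ne')] using this)
  simpa only [star_mulVec, dotProduct_mulVec, vecMul_vecMul] using hM.dotProduct_mulVec_pos hSx

theorem stmt_11 (n m T s : ℕ)
    (A : Matrix (Fin n) (Fin n) ℝ) (B : Matrix (Fin n) (Fin m) ℝ)
    (U0 : Matrix (Fin m) (Fin T) ℝ) (X0 X1 D0 : Matrix (Fin n) (Fin T) ℝ)
    (Δ : Matrix (Fin n) (Fin s) ℝ)
    (Ω : Matrix (Fin n) (Fin n) ℝ) (hΩ : Ω.PosDef)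
    (hdata : X1 = A * X0 + B * U0 + D0)
    (hD0 : (Δ * Δᵀ - D0 * D0ᵀ).PosSemidef)
    (ε : ℝ) (hε : 0 < ε) (Y : Matrix (Fin T) (Fin n) ℝ)
    (hLMI : (-(Matrix.fromBlocks
        (X1 * Y + (X1 * Y)ᵀ + Ω + ε • (Δ * Δᵀ)) Yᵀ Y
        (-(ε • (1 : Matrix (Fin T) (Fin T) ℝ))))).PosDef)
    (hX0Y : (X0 * Y).PosDef)
    (S : Matrix (Fin n) (Fin n) ℝ) (hSdef : S = (X0 * Y)⁻¹)
    (K : Matrix (Fin m) (Fin n) ℝ) (hKdef : K = U0 * Y * S) :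
    S.PosDef ∧
      (-(S * (A + B * K) + (A + B * K)ᵀ * S + S * Ω * S)).PosDef := by
  have hPdet : IsUnit (X0 * Y).det := isUnit_iff_ne_zero.2 hX0Y.det_pos.ne'
  have hS : S.PosDef := hSdef ▸ hX0Y.inv
  have hPS : (X0 * Y) * S = 1 := by rw [hSdef]; exact Matrix.mul_nonsing_inv _ hPdet
  have hSP : S * (X0 * Y) = 1 := by rw [hSdef]; exact Matrix.nonsing_inv_mul _ hPdet
  have hPsym : (X0 * Y)ᵀ = X0 * Y := by
    rw [← conjTranspose_eq_transpose_of_trivial]; exact hX0Y.1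
  refine ⟨hS, ?_⟩
  -- the LMI as a block matrix with hermitian corner
  set M : Matrix (Fin n) (Fin n) ℝ := X1 * Y + (X1 * Y)ᵀ + Ω + ε • (Δ * Δᵀ) with hM
  have hblk : (-(Matrix.fromBlocks M Yᵀ Y (-(ε • (1 : Matrix (Fin T) (Fin T) ℝ)))))
      = Matrix.fromBlocks (-M) (-Yᵀ) (-Yᵀ)ᴴ (ε • (1 : Matrix (Fin T) (Fin T) ℝ)) := by
    ext i j
    cases i <;> cases j <;>
      simp [Matrix.fromBlocks, conjTranspose_eq_transpose_of_trivial]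
  have hDpd : (ε • (1 : Matrix (Fin T) (Fin T) ℝ)).PosDef := my_pd_smul Matrix.PosDef.one hε
  have hG0 : ((-M) - (-Yᵀ) * (ε • (1 : Matrix (Fin T) (Fin T) ℝ))⁻¹ * (-Yᵀ)ᴴ).PosDef :=
    my_schur _ _ hDpd (hblk ▸ hLMI)
  have hDinv : (ε • (1 : Matrix (Fin T) (Fin T) ℝ))⁻¹ = ε⁻¹ • 1 := by
    apply Matrix.inv_eq_right_inv
    rw [Matrix.smul_mul, Matrix.mul_smul, smul_smul, mul_inv_cancel₀ hε.ne']
    simp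
  have hG : ((-M) - ε⁻¹ • (Yᵀ * Y)).PosDef := by
    have heq : (-Yᵀ) * (ε • (1 : Matrix (Fin T) (Fin T) ℝ))⁻¹ * (-Yᵀ)ᴴ = ε⁻¹ • (Yᵀ * Y) := by
      have hY : (-Yᵀ)ᴴ = -Y := by
        rw [conjTranspose_neg, conjTranspose_eq_transpose_of_trivial, transpose_transpose]
      rw [hDinv, hY]
      simp [Matrix.mul_smul, Matrix.smul_mul]
    rw [← heq]; exact hG0
  -- data identities
  have hUY : U0 * Y = K * (X0 * Y) := by
    rw [hKdef, Matrix.mul_assoc, hSP, Matrix.mul_one]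
  have hX1Y : X1 * Y = (A + B * K) * (X0 * Y) + D0 * Y := by
    rw [hdata]
    simp only [Matrix.add_mul, Matrix.mul_assoc, hUY]
  have hX1Yt : (X1 * Y)ᵀ = (X0 * Y) * (A + B * K)ᵀ + Yᵀ * D0ᵀ := by
    rw [hX1Y, transpose_add, transpose_mul, hPsym, transpose_mul]
  have hE1 : (ε • (Δ * Δᵀ - D0 * D0ᵀ)).PosSemidef := my_psd_smul hD0 hε.le
  set C : Matrix (Fin n) (Fin T) ℝ := Real.sqrt ε • D0 + (Real.sqrt ε)⁻¹ • Yᵀ with hC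
  have hE2 : (C * Cᴴ).PosSemidef := Matrix.posSemidef_self_mul_conjTranspose C
  have hsq : Real.sqrt ε * Real.sqrt ε = ε := Real.mul_self_sqrt hε.le
  have hne : Real.sqrt ε ≠ 0 := (Real.sqrt_pos.2 hε).ne'
  have hb : (Real.sqrt ε)⁻¹ * (Real.sqrt ε)⁻¹ = ε⁻¹ := by rw [← mul_inv, hsq]
  have hCt : Cᴴ = Real.sqrt ε • D0ᵀ + (Real.sqrt ε)⁻¹ • Y := by
    rw [hC]
    simp [conjTranspose_add, conjTranspose_smul, conjTranspose_eq_transpose_of_trivial,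
      transpose_transpose]
  have hCC : C * Cᴴ = ε • (D0 * D0ᵀ) + D0 * Y + Yᵀ * D0ᵀ + ε⁻¹ • (Yᵀ * Y) := by
    rw [hC, hCt]
    simp only [Matrix.add_mul, Matrix.mul_add, Matrix.smul_mul, Matrix.mul_smul, smul_add,
      smul_smul, hsq, hb, mul_inv_cancel₀ hne, inv_mul_cancel₀ hne, one_smul]
    abel
  have hkey : -((A + B * K) * (X0 * Y) + (X0 * Y) * (A + B * K)ᵀ + Ω)
      = ((-M) - ε⁻¹ • (Yᵀ * Y)) + ε • (Δ * Δᵀ - D0 * D0ᵀ) + C * Cᴴ := by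
    rw [hCC, hM, hX1Yt, hX1Y, smul_sub]
    abel
  have hNeg := (hG.add_posSemidef hE1).add_posSemidef hE2
  rw [← hkey] at hNeg
  have hfin : S * (-((A + B * K) * (X0 * Y) + (X0 * Y) * (A + B * K)ᵀ + Ω)) * S
      = -(S * (A + B * K) + (A + B * K)ᵀ * S + S * Ω * S) := by
    have h1 : S * ((A + B * K) * (X0 * Y)) * S = S * (A + B * K) := by
      rw [Matrix.mul_assoc, Matrix.mul_assoc, hPS, Matrix.mul_one]
    have h2 : S * ((X0 * Y) * (A + B * K)ᵀ) * S = (A + B * K)ᵀ * S := by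
      rw [← Matrix.mul_assoc S (X0 * Y) _, hSP, Matrix.one_mul]
    rw [Matrix.mul_neg, Matrix.neg_mul, Matrix.mul_add, Matrix.mul_add,
      Matrix.add_mul, Matrix.add_mul, h1, h2]
  have hres := my_pd_conj hNeg hS
  rw [hS.1] at hres
  rw [← hfin]
  exact hres
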